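/- For real numbers q₁ ≠ q₂ and a fixed real parameter w, define the M₂(ℝ)⊗M₂(ℝ)-valued functions a(q₁,q₂) = (1/(2(q₁−q₂)))·(−w·e₁₁⊗e₂₂ + e₁₂⊗e₂₁ − e₂₁⊗e₁₂ + w·e₂₂⊗e₁₁) and c(q₁,q₂) = (1/(2(q₁−q₂)))·(−w·e₁₁⊗e₁₁ + e₁₂⊗e₁₂ − e₂₁⊗e₂₁ + w·e₂₂⊗e₂₂). For 1 ≤ j < k ≤ 3 let r_{jk} (r = a or c) denote the operator on (ℝ²)^{⊗3} acting as r(q₁,q₂) on tensor factors j and k and as the identity on the remaining factor. For k ∈ {1,2,3} and any differentiable matrix-valued function r of (q₁,q₂), define h_k∂r = (e₁₁ acting on factor k)·∂r/∂q₁ + (e₂₂ acting on factor k)·∂r/∂q₂. Then on the domain q₁ ≠ q₂: [a₁₂, c₁₃ + c₂₃] + [c₁₃, c₂₃] + (1/2)·( −h₃∂a₁₂ + h₁∂c₂₃ − h₂∂c₁₃ ) = 0. -/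

import Mathlib

open Matrix Kronecker

noncomputable section

/-- `2×2` real matrices. -/
abbrev M2 : Type := Matrix (Fin 2) (Fin 2) ℝ

/-- `M₂(ℝ) ⊗ M₂(ℝ)` realized via the Kronecker product. -/
abbrev M4 : Type := Matrix (Fin 2 × Fin 2) (Fin 2 × Fin 2) ℝ

/-- Operators on `(ℝ²)^{⊗3}`, realized as matrices indexed by triples. -/
abbrev M8 : Type := Matrix (Fin 2 × Fin 2 × Fin 2) (Fin 2 × Fin 2 × Fin 2) ℝ

/-- The `2×2` elementary matrix `e_{ij}` (indices `0,1` for `1,2`). -/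
def E (i j : Fin 2) : M2 := Matrix.single i j 1

/-- The dynamical `a`-matrix of the second Poisson structure of the `N = 2`
rational Calogero–Moser model, with gauge parameter `w`:
`a(q₁,q₂) = (1/(2(q₁−q₂)))·(−w e₁₁⊗e₂₂ + e₁₂⊗e₂₁ − e₂₁⊗e₁₂ + w e₂₂⊗e₁₁)`. -/
def aMat (w q₁ q₂ : ℝ) : M4 :=
  (1 / (2 * (q₁ - q₂))) •
    (-(w • (E 0 0 ⊗ₖ E 1 1)) + E 0 1 ⊗ₖ E 1 0 - E 1 0 ⊗ₖ E 0 1 + w • (E 1 1 ⊗ₖ E 0 0))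

/-- Place a matrix of `M₂(ℝ)⊗M₂(ℝ)` on tensor factors 1 and 2 of `(ℝ²)^{⊗3}`,
acting as identity on factor 3. -/
def place12 (r : M4) : M8 :=
  Matrix.of fun i j => r (i.1, i.2.1) (j.1, j.2.1) * (if i.2.2 = j.2.2 then 1 else 0)

/-- Place a matrix of `M₂(ℝ)⊗M₂(ℝ)` on tensor factors 1 and 3 of `(ℝ²)^{⊗3}`,
acting as identity on factor 2. -/
def place13 (r : M4) : M8 :=
  Matrix.of fun i j => r (i.1, i.2.2) (j.1, j.2.2) * (if i.2.1 = j.2.1 then 1 else 0)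

/-- Place a matrix of `M₂(ℝ)⊗M₂(ℝ)` on tensor factors 2 and 3 of `(ℝ²)^{⊗3}`,
acting as identity on factor 1. -/
def place23 (r : M4) : M8 :=
  Matrix.of fun i j => r (i.2.1, i.2.2) (j.2.1, j.2.2) * (if i.1 = j.1 then 1 else 0)

/-- A `2×2` matrix acting on tensor factor 1 of `(ℝ²)^{⊗3}`. -/
def fac1 (m : M2) : M8 :=
  Matrix.of fun i j => m i.1 j.1 * (if i.2 = j.2 then 1 else 0)

/-- A `2×2` matrix acting on tensor factor 2 of `(ℝ²)^{⊗3}`. -/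
def fac2 (m : M2) : M8 :=
  Matrix.of fun i j => m i.2.1 j.2.1 * (if (i.1, i.2.2) = (j.1, j.2.2) then 1 else 0)

/-- A `2×2` matrix acting on tensor factor 3 of `(ℝ²)^{⊗3}`. -/
def fac3 (m : M2) : M8 :=
  Matrix.of fun i j => m i.2.2 j.2.2 * (if (i.1, i.2.1) = (j.1, j.2.1) then 1 else 0)

/-- Entrywise partial derivative in the first variable `q₁`. -/
def pd1 (f : ℝ → ℝ → M8) (q₁ q₂ : ℝ) : M8 :=
  Matrix.of fun i j => deriv (fun t => f t q₂ i j) q₁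

/-- Entrywise partial derivative in the second variable `q₂`. -/
def pd2 (f : ℝ → ℝ → M8) (q₁ q₂ : ℝ) : M8 :=
  Matrix.of fun i j => deriv (fun t => f q₁ t i j) q₂

/-- `h₁∂r = (e₁₁ on factor 1)·∂r/∂q₁ + (e₂₂ on factor 1)·∂r/∂q₂`. -/
def hd1 (f : ℝ → ℝ → M8) (q₁ q₂ : ℝ) : M8 :=
  fac1 (E 0 0) * pd1 f q₁ q₂ + fac1 (E 1 1) * pd2 f q₁ q₂

/-- `h₂∂r = (e₁₁ on factor 2)·∂r/∂q₁ + (e₂₂ on factor 2)·∂r/∂q₂`. -/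
def hd2 (f : ℝ → ℝ → M8) (q₁ q₂ : ℝ) : M8 :=
  fac2 (E 0 0) * pd1 f q₁ q₂ + fac2 (E 1 1) * pd2 f q₁ q₂

/-- `h₃∂r = (e₁₁ on factor 3)·∂r/∂q₁ + (e₂₂ on factor 3)·∂r/∂q₂`. -/
def hd3 (f : ℝ → ℝ → M8) (q₁ q₂ : ℝ) : M8 :=
  fac3 (E 0 0) * pd1 f q₁ q₂ + fac3 (E 1 1) * pd2 f q₁ q₂

/-- `a₁₂` as a function of the dynamical variables. -/
def a12 (w : ℝ) : ℝ → ℝ → M8 := fun q₁ q₂ => place12 (aMat w q₁ q₂)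

/-- `a₁₃` as a function of the dynamical variables. -/
def a13 (w : ℝ) : ℝ → ℝ → M8 := fun q₁ q₂ => place13 (aMat w q₁ q₂)

/-- `a₂₃` as a function of the dynamical variables. -/
def a23 (w : ℝ) : ℝ → ℝ → M8 := fun q₁ q₂ => place23 (aMat w q₁ q₂)

/-- `a₃₂ = −a₂₃`. -/
def a32 (w : ℝ) : ℝ → ℝ → M8 := fun q₁ q₂ => -a23 w q₁ q₂

/-- `a₃₁ = −a₁₃`. -/
def a31 (w : ℝ) : ℝ → ℝ → M8 := fun q₁ q₂ => -a13 w q₁ q₂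


/-- The dynamical `c`-matrix of the second Poisson structure of the `N = 2`
rational Calogero–Moser model, with gauge parameter `w`:
`c(q₁,q₂) = (1/(2(q₁−q₂)))·(−w e₁₁⊗e₁₁ + e₁₂⊗e₁₂ − e₂₁⊗e₂₁ + w e₂₂⊗e₂₂)`. -/
def cMat (w q₁ q₂ : ℝ) : M4 :=
  (1 / (2 * (q₁ - q₂))) •
    (-(w • (E 0 0 ⊗ₖ E 0 0)) + E 0 1 ⊗ₖ E 0 1 - E 1 0 ⊗ₖ E 1 0 + w • (E 1 1 ⊗ₖ E 1 1))

/-- `c₁₃` as a function of the dynamical variables. -/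
def c13 (w : ℝ) : ℝ → ℝ → M8 := fun q₁ q₂ => place13 (cMat w q₁ q₂)

/-- `c₂₃` as a function of the dynamical variables. -/
def c23 (w : ℝ) : ℝ → ℝ → M8 := fun q₁ q₂ => place23 (cMat w q₁ q₂)

/-! ### Auxiliary machinery for `stmt10` -/

section Stmt10Aux

/-- Integer elementary `2×2` matrix. -/
def zE (i j : Fin 2) : Matrix (Fin 2) (Fin 2) ℤ := Matrix.single i j 1

/-- Integer analogue of `place12`. -/
def zp12 (r : Matrix (Fin 2 × Fin 2) (Fin 2 × Fin 2) ℤ) :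
    Matrix (Fin 2 × Fin 2 × Fin 2) (Fin 2 × Fin 2 × Fin 2) ℤ :=
  Matrix.of fun i j => r (i.1, i.2.1) (j.1, j.2.1) * (if i.2.2 = j.2.2 then 1 else 0)

/-- Integer analogue of `place13`. -/
def zp13 (r : Matrix (Fin 2 × Fin 2) (Fin 2 × Fin 2) ℤ) :
    Matrix (Fin 2 × Fin 2 × Fin 2) (Fin 2 × Fin 2 × Fin 2) ℤ :=
  Matrix.of fun i j => r (i.1, i.2.2) (j.1, j.2.2) * (if i.2.1 = j.2.1 then 1 else 0)

/-- Integer analogue of `place23`. -/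
def zp23 (r : Matrix (Fin 2 × Fin 2) (Fin 2 × Fin 2) ℤ) :
    Matrix (Fin 2 × Fin 2 × Fin 2) (Fin 2 × Fin 2 × Fin 2) ℤ :=
  Matrix.of fun i j => r (i.2.1, i.2.2) (j.2.1, j.2.2) * (if i.1 = j.1 then 1 else 0)

/-- Integer analogue of `fac1`. -/
def zf1 (m : Matrix (Fin 2) (Fin 2) ℤ) :
    Matrix (Fin 2 × Fin 2 × Fin 2) (Fin 2 × Fin 2 × Fin 2) ℤ :=
  Matrix.of fun i j => m i.1 j.1 * (if i.2 = j.2 then 1 else 0)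

/-- Integer analogue of `fac2`. -/
def zf2 (m : Matrix (Fin 2) (Fin 2) ℤ) :
    Matrix (Fin 2 × Fin 2 × Fin 2) (Fin 2 × Fin 2 × Fin 2) ℤ :=
  Matrix.of fun i j => m i.2.1 j.2.1 * (if (i.1, i.2.2) = (j.1, j.2.2) then 1 else 0)

/-- Integer analogue of `fac3`. -/
def zf3 (m : Matrix (Fin 2) (Fin 2) ℤ) :
    Matrix (Fin 2 × Fin 2 × Fin 2) (Fin 2 × Fin 2 × Fin 2) ℤ :=
  Matrix.of fun i j => m i.2.2 j.2.2 * (if (i.1, i.2.1) = (j.1, j.2.1) then 1 else 0)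

/-- `w`-free part of the `a`-matrix numerator. -/
def zA0 : Matrix (Fin 2 × Fin 2) (Fin 2 × Fin 2) ℤ := zE 0 1 ⊗ₖ zE 1 0 - zE 1 0 ⊗ₖ zE 0 1
/-- `w`-linear part of the `a`-matrix numerator. -/
def zA1 : Matrix (Fin 2 × Fin 2) (Fin 2 × Fin 2) ℤ := -(zE 0 0 ⊗ₖ zE 1 1) + zE 1 1 ⊗ₖ zE 0 0
/-- `w`-free part of the `c`-matrix numerator. -/
def zC0 : Matrix (Fin 2 × Fin 2) (Fin 2 × Fin 2) ℤ := zE 0 1 ⊗ₖ zE 0 1 - zE 1 0 ⊗ₖ zE 1 0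
/-- `w`-linear part of the `c`-matrix numerator. -/
def zC1 : Matrix (Fin 2 × Fin 2) (Fin 2 × Fin 2) ℤ := -(zE 0 0 ⊗ₖ zE 0 0) + zE 1 1 ⊗ₖ zE 1 1

/-- Entrywise integer-to-real cast as a ring hom on `8×8` matrices. -/
noncomputable def φz : Matrix (Fin 2 × Fin 2 × Fin 2) (Fin 2 × Fin 2 × Fin 2) ℤ →+* M8 :=
  (Int.castRingHom ℝ).mapMatrix

/-- The numerator of the `a`-matrix. -/
def aBase (w : ℝ) : M4 :=
  -(w • (E 0 0 ⊗ₖ E 1 1)) + E 0 1 ⊗ₖ E 1 0 - E 1 0 ⊗ₖ E 0 1 + w • (E 1 1 ⊗ₖ E 0 0)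

/-- The numerator of the `c`-matrix. -/
def cBase (w : ℝ) : M4 :=
  -(w • (E 0 0 ⊗ₖ E 0 0)) + E 0 1 ⊗ₖ E 0 1 - E 1 0 ⊗ₖ E 1 0 + w • (E 1 1 ⊗ₖ E 1 1)

lemma place12_decomp (w : ℝ) :
    place12 (aBase w) = φz (zp12 zA0) + w • φz (zp12 zA1) := by
  ext i j
  simp only [place12, zp12, aBase, zA0, zA1, E, zE, φz, RingHom.mapMatrix_apply,
    Matrix.map_apply, Matrix.of_apply, Matrix.add_apply, Matrix.sub_apply, Matrix.neg_apply,
    Matrix.smul_apply, Matrix.kroneckerMap_apply, Matrix.single, smul_eq_mul,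
    Int.coe_castRingHom]
  push_cast [apply_ite (Int.cast : ℤ → ℝ)]
  ring

lemma place13_decomp (w : ℝ) :
    place13 (cBase w) = φz (zp13 zC0) + w • φz (zp13 zC1) := by
  ext i j
  simp only [place13, zp13, cBase, zC0, zC1, E, zE, φz, RingHom.mapMatrix_apply,
    Matrix.map_apply, Matrix.of_apply, Matrix.add_apply, Matrix.sub_apply, Matrix.neg_apply,
    Matrix.smul_apply, Matrix.kroneckerMap_apply, Matrix.single, smul_eq_mul,
    Int.coe_castRingHom]
  push_cast [apply_ite (Int.cast : ℤ → ℝ)]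
  ring

lemma place23_decomp (w : ℝ) :
    place23 (cBase w) = φz (zp23 zC0) + w • φz (zp23 zC1) := by
  ext i j
  simp only [place23, zp23, cBase, zC0, zC1, E, zE, φz, RingHom.mapMatrix_apply,
    Matrix.map_apply, Matrix.of_apply, Matrix.add_apply, Matrix.sub_apply, Matrix.neg_apply,
    Matrix.smul_apply, Matrix.kroneckerMap_apply, Matrix.single, smul_eq_mul,
    Int.coe_castRingHom]
  push_cast [apply_ite (Int.cast : ℤ → ℝ)]
  ring

lemma fac1_map (i j : Fin 2) : fac1 (E i j) = φz (zf1 (zE i j)) := by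
  ext p q
  simp only [fac1, zf1, E, zE, φz, RingHom.mapMatrix_apply, Matrix.map_apply,
    Matrix.of_apply, Matrix.single, Int.coe_castRingHom]
  push_cast [apply_ite (Int.cast : ℤ → ℝ)]
  ring

lemma fac2_map (i j : Fin 2) : fac2 (E i j) = φz (zf2 (zE i j)) := by
  ext p q
  simp only [fac2, zf2, E, zE, φz, RingHom.mapMatrix_apply, Matrix.map_apply,
    Matrix.of_apply, Matrix.single, Int.coe_castRingHom]
  push_cast [apply_ite (Int.cast : ℤ → ℝ)]
  ring

lemma fac3_map (i j : Fin 2) : fac3 (E i j) = φz (zf3 (zE i j)) := by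
  ext p q
  simp only [fac3, zf3, E, zE, φz, RingHom.mapMatrix_apply, Matrix.map_apply,
    Matrix.of_apply, Matrix.single, Int.coe_castRingHom]
  push_cast [apply_ite (Int.cast : ℤ → ℝ)]
  ring

lemma zkey0 :
    zp12 zA0 * zp13 zC0 + zp12 zA0 * zp23 zC0
    - zp13 zC0 * zp12 zA0 - zp23 zC0 * zp12 zA0
    + zp13 zC0 * zp23 zC0 - zp23 zC0 * zp13 zC0
    + zf3 (zE 0 0) * zp12 zA0 - zf3 (zE 1 1) * zp12 zA0
    - zf1 (zE 0 0) * zp23 zC0 + zf1 (zE 1 1) * zp23 zC0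
    + zf2 (zE 0 0) * zp13 zC0 - zf2 (zE 1 1) * zp13 zC0 = 0 := by decide

lemma zkey1 :
    zp12 zA0 * zp13 zC1 + zp12 zA1 * zp13 zC0
    + zp12 zA0 * zp23 zC1 + zp12 zA1 * zp23 zC0
    - zp13 zC0 * zp12 zA1 - zp13 zC1 * zp12 zA0
    - zp23 zC0 * zp12 zA1 - zp23 zC1 * zp12 zA0
    + zp13 zC0 * zp23 zC1 + zp13 zC1 * zp23 zC0
    - zp23 zC0 * zp13 zC1 - zp23 zC1 * zp13 zC0
    + zf3 (zE 0 0) * zp12 zA1 - zf3 (zE 1 1) * zp12 zA1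
    - zf1 (zE 0 0) * zp23 zC1 + zf1 (zE 1 1) * zp23 zC1
    + zf2 (zE 0 0) * zp13 zC1 - zf2 (zE 1 1) * zp13 zC1 = 0 := by decide

lemma zkey2 :
    zp12 zA1 * zp13 zC1 + zp12 zA1 * zp23 zC1
    - zp13 zC1 * zp12 zA1 - zp23 zC1 * zp12 zA1
    + zp13 zC1 * zp23 zC1 - zp23 zC1 * zp13 zC1 = 0 := by decide

/-- The constant-matrix form of the mixed dynamical Yang–Baxter identity. -/
lemma keyR (w : ℝ) :
    place12 (aBase w) * place13 (cBase w) + place12 (aBase w) * place23 (cBase w)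
    - place13 (cBase w) * place12 (aBase w) - place23 (cBase w) * place12 (aBase w)
    + place13 (cBase w) * place23 (cBase w) - place23 (cBase w) * place13 (cBase w)
    + fac3 (E 0 0) * place12 (aBase w) - fac3 (E 1 1) * place12 (aBase w)
    - fac1 (E 0 0) * place23 (cBase w) + fac1 (E 1 1) * place23 (cBase w)
    + fac2 (E 0 0) * place13 (cBase w) - fac2 (E 1 1) * place13 (cBase w) = 0 := by
  rw [show (0 : M8) =
      φz (zp12 zA0 * zp13 zC0 + zp12 zA0 * zp23 zC0
        - zp13 zC0 * zp12 zA0 - zp23 zC0 * zp12 zA0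
        + zp13 zC0 * zp23 zC0 - zp23 zC0 * zp13 zC0
        + zf3 (zE 0 0) * zp12 zA0 - zf3 (zE 1 1) * zp12 zA0
        - zf1 (zE 0 0) * zp23 zC0 + zf1 (zE 1 1) * zp23 zC0
        + zf2 (zE 0 0) * zp13 zC0 - zf2 (zE 1 1) * zp13 zC0)
      + w • φz (zp12 zA0 * zp13 zC1 + zp12 zA1 * zp13 zC0
        + zp12 zA0 * zp23 zC1 + zp12 zA1 * zp23 zC0
        - zp13 zC0 * zp12 zA1 - zp13 zC1 * zp12 zA0
        - zp23 zC0 * zp12 zA1 - zp23 zC1 * zp12 zA0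
        + zp13 zC0 * zp23 zC1 + zp13 zC1 * zp23 zC0
        - zp23 zC0 * zp13 zC1 - zp23 zC1 * zp13 zC0
        + zf3 (zE 0 0) * zp12 zA1 - zf3 (zE 1 1) * zp12 zA1
        - zf1 (zE 0 0) * zp23 zC1 + zf1 (zE 1 1) * zp23 zC1
        + zf2 (zE 0 0) * zp13 zC1 - zf2 (zE 1 1) * zp13 zC1)
      + (w * w) • φz (zp12 zA1 * zp13 zC1 + zp12 zA1 * zp23 zC1
        - zp13 zC1 * zp12 zA1 - zp23 zC1 * zp12 zA1
        + zp13 zC1 * zp23 zC1 - zp23 zC1 * zp13 zC1) from by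
    rw [zkey0, zkey1, zkey2]; simp]
  rw [place12_decomp, place13_decomp, place23_decomp]
  simp only [fac1_map, fac2_map, fac3_map, _root_.map_add, _root_.map_sub, _root_.map_mul, _root_.map_neg]
  simp only [mul_add, add_mul, sub_mul, mul_sub, smul_mul_assoc, mul_smul_comm, smul_smul,
    smul_add, smul_sub, smul_neg, neg_smul]
  module

end Stmt10Aux

section Stmt10Deriv

lemma a12_eq (w : ℝ) :
    a12 w = fun q₁ q₂ => (1 / (2 * (q₁ - q₂))) • place12 (aBase w) := by
  funext q₁ q₂
  show place12 (aMat w q₁ q₂) = _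
  have : aMat w q₁ q₂ = (1 / (2 * (q₁ - q₂))) • aBase w := rfl
  rw [this]
  ext i j
  simp [place12, mul_assoc]

lemma c13_eq (w : ℝ) :
    c13 w = fun q₁ q₂ => (1 / (2 * (q₁ - q₂))) • place13 (cBase w) := by
  funext q₁ q₂
  show place13 (cMat w q₁ q₂) = _
  have : cMat w q₁ q₂ = (1 / (2 * (q₁ - q₂))) • cBase w := rfl
  rw [this]
  ext i j
  simp [place13, mul_assoc]

lemma c23_eq (w : ℝ) :
    c23 w = fun q₁ q₂ => (1 / (2 * (q₁ - q₂))) • place23 (cBase w) := by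
  funext q₁ q₂
  show place23 (cMat w q₁ q₂) = _
  have : cMat w q₁ q₂ = (1 / (2 * (q₁ - q₂))) • cBase w := rfl
  rw [this]
  ext i j
  simp [place23, mul_assoc]

lemma pd1_sm (M : M8) (q₁ q₂ : ℝ) (h : q₁ ≠ q₂) :
    pd1 (fun t s => (1 / (2 * (t - s))) • M) q₁ q₂ = (-(1 / (2 * (q₁ - q₂) ^ 2))) • M := by
  ext i j
  have h2 : (2 : ℝ) * (q₁ - q₂) ≠ 0 := mul_ne_zero two_ne_zero (sub_ne_zero.mpr h)
  have h1 : HasDerivAt (fun t : ℝ => 2 * (t - q₂)) 2 q₁ := by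
    simpa using ((hasDerivAt_id q₁).sub_const q₂).const_mul (2 : ℝ)
  have H := (h1.inv h2).mul_const (M i j)
  simp only [pd1, Matrix.of_apply, Matrix.smul_apply, smul_eq_mul, one_div]
  rw [show deriv (fun t : ℝ => (2 * (t - q₂))⁻¹ * M i j) q₁
      = -2 / (2 * (q₁ - q₂)) ^ 2 * M i j from H.deriv]
  have hs : q₁ - q₂ ≠ 0 := sub_ne_zero.mpr h
  field_simp

lemma pd2_sm (M : M8) (q₁ q₂ : ℝ) (h : q₁ ≠ q₂) :
    pd2 (fun t s => (1 / (2 * (t - s))) • M) q₁ q₂ = (1 / (2 * (q₁ - q₂) ^ 2)) • M := by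
  ext i j
  have h2 : (2 : ℝ) * (q₁ - q₂) ≠ 0 := mul_ne_zero two_ne_zero (sub_ne_zero.mpr h)
  have h1 : HasDerivAt (fun t : ℝ => 2 * (q₁ - t)) (-2) q₂ := by
    simpa using ((hasDerivAt_id q₂).const_sub q₁).const_mul (2 : ℝ)
  have H := (h1.inv h2).mul_const (M i j)
  simp only [pd2, Matrix.of_apply, Matrix.smul_apply, smul_eq_mul, one_div]
  rw [show deriv (fun t : ℝ => (2 * (q₁ - t))⁻¹ * M i j) q₂
      = - -2 / (2 * (q₁ - q₂)) ^ 2 * M i j from H.deriv]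
  have hs : q₁ - q₂ ≠ 0 := sub_ne_zero.mpr h
  field_simp

end Stmt10Deriv

/-- the mixed classical dynamical Yang–Baxter equation
`[a₁₂, c₁₃ + c₂₃] + [c₁₃, c₂₃] + ½(−h₃∂a₁₂ + h₁∂c₂₃ − h₂∂c₁₃) = 0`
holds for the explicit `a`- and `c`-matrices on the domain `q₁ ≠ q₂`. -/
theorem stmt10 (w q₁ q₂ : ℝ) (hq : q₁ ≠ q₂) :
    (a12 w q₁ q₂ * (c13 w q₁ q₂ + c23 w q₁ q₂)
      - (c13 w q₁ q₂ + c23 w q₁ q₂) * a12 w q₁ q₂)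
    + (c13 w q₁ q₂ * c23 w q₁ q₂ - c23 w q₁ q₂ * c13 w q₁ q₂)
    + (1 / 2 : ℝ) • (-hd3 (a12 w) q₁ q₂ + hd1 (c23 w) q₁ q₂ - hd2 (c13 w) q₁ q₂)
    = 0 := by
  rw [a12_eq, c13_eq, c23_eq]
  simp only [hd1, hd2, hd3, pd1_sm _ q₁ q₂ hq, pd2_sm _ q₁ q₂ hq]
  rw [show (0 : M8) = ((1 / (2 * (q₁ - q₂))) * (1 / (2 * (q₁ - q₂)))) •
      (place12 (aBase w) * place13 (cBase w) + place12 (aBase w) * place23 (cBase w)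
      - place13 (cBase w) * place12 (aBase w) - place23 (cBase w) * place12 (aBase w)
      + place13 (cBase w) * place23 (cBase w) - place23 (cBase w) * place13 (cBase w)
      + fac3 (E 0 0) * place12 (aBase w) - fac3 (E 1 1) * place12 (aBase w)
      - fac1 (E 0 0) * place23 (cBase w) + fac1 (E 1 1) * place23 (cBase w)
      + fac2 (E 0 0) * place13 (cBase w) - fac2 (E 1 1) * place13 (cBase w)) from by
    rw [keyR w]; simp]
  simp only [mul_add, add_mul, sub_mul, mul_sub, smul_mul_assoc, mul_smul_comm, smul_smul,
    mul_neg, neg_mul, smul_add, smul_sub, smul_neg, neg_smul, neg_add, neg_neg, neg_sub]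
  match_scalars
  all_goals (field_simp; try ring)

end
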